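/- arXiv:1312.2194 — 2 statements merged into one kernel-verified Lean document; each statement's English description precedes it below -/
import Mathlib

section
/- Let p ≠ q be points in the plane and let a and b lie in opposite open halfplanes bounded by the line through p and q. Then b lies in the open interior of the circumdisc of p, q, a if and only if a lies in the open interior of the circumdisc of p, q, b. -/
noncomputable section

/-- Points of the Euclidean plane. -/
abbrev Pt := EuclideanSpace ℝ (Fin 2)

/-- The orientation (cross product) determinant of the triple `(p, q, r)`. -/
def orient (p q r : Pt) : ℝ :=
  (q 0 - p 0) * (r 1 - p 1) - (q 1 - p 1) * (r 0 - p 0)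

lemma distsq (x y : Pt) : dist x y ^ 2 = (x 0 - y 0) ^ 2 + (x 1 - y 1) ^ 2 := by
  rw [EuclideanSpace.dist_eq]
  rw [Real.sq_sqrt (by positivity)]
  rw [Fin.sum_univ_two]
  simp [Real.dist_eq, sq_abs]

lemma key_scalar (p0 p1 q0 q1 a0 a1 b0 b1 c0 c1 : ℝ)
    (hab : (((q0-p0)*(a1-p1)-(q1-p1)*(a0-p0)) * ((q0-p0)*(b1-p1)-(q1-p1)*(b0-p0))) < 0)
    (E1 : (p0-c0)^2+(p1-c1)^2 = (q0-c0)^2+(q1-c1)^2)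
    (E2 : (p0-c0)^2+(p1-c1)^2 = (a0-c0)^2+(a1-c1)^2)
    (Hlt : (b0-c0)^2+(b1-c1)^2 < (p0-c0)^2+(p1-c1)^2) :
    ∃ d0 d1 : ℝ, (p0-d0)^2+(p1-d1)^2 = (q0-d0)^2+(q1-d1)^2 ∧
      (p0-d0)^2+(p1-d1)^2 = (b0-d0)^2+(b1-d1)^2 ∧
      (a0-d0)^2+(a1-d1)^2 < (p0-d0)^2+(p1-d1)^2 := by
  set D : ℝ := (q0-p0)*(a1-p1)-(q1-p1)*(a0-p0) with hD
  set D' : ℝ := (q0-p0)*(b1-p1)-(q1-p1)*(b0-p0) with hD'def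
  have hD' : D' ≠ 0 := by
    intro h
    rw [h, mul_zero] at hab
    exact lt_irrefl 0 hab
  set Sq : ℝ := q0^2+q1^2-p0^2-p1^2 with hSq
  set Sa : ℝ := a0^2+a1^2-p0^2-p1^2 with hSa
  set Sb : ℝ := b0^2+b1^2-p0^2-p1^2 with hSb
  have e1 : 2*(q0-p0)*c0 + 2*(q1-p1)*c1 = Sq := by rw [hSq]; linear_combination E1
  have e2 : 2*(a0-p0)*c0 + 2*(a1-p1)*c1 = Sa := by rw [hSa]; linear_combination E2
  set H : ℝ := 2*(b0-p0)*c0 + 2*(b1-p1)*c1 - Sb with hH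
  have hHpos : 0 < H := by
    have : (p0-c0)^2+(p1-c1)^2 - ((b0-c0)^2+(b1-c1)^2) = H := by
      rw [hH, hSb]; ring
    linarith
  have cramer0 : 2*D*c0 = Sq*(a1-p1) - Sa*(q1-p1) := by
    rw [hD]; linear_combination (a1-p1)*e1 - (q1-p1)*e2
  have cramer1 : 2*D*c1 = (q0-p0)*Sa - (a0-p0)*Sq := by
    rw [hD]; linear_combination (q0-p0)*e2 - (a0-p0)*e1
  have hDH : D*H = Sq*((b0-p0)*(a1-p1)-(b1-p1)*(a0-p0)) + Sa*D' - Sb*D := by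
    rw [hH, hD'def]
    linear_combination (b0-p0)*cramer0 + (b1-p1)*cramer1
  refine ⟨(Sq*(b1-p1) - Sb*(q1-p1))/(2*D'), ((q0-p0)*Sb - (b0-p0)*Sq)/(2*D'), ?_, ?_, ?_⟩
  · field_simp
    ring
  · field_simp
    ring
  · have hdiff : (p0-(Sq*(b1-p1) - Sb*(q1-p1))/(2*D'))^2+(p1-((q0-p0)*Sb - (b0-p0)*Sq)/(2*D'))^2
        - ((a0-(Sq*(b1-p1) - Sb*(q1-p1))/(2*D'))^2+(a1-((q0-p0)*Sb - (b0-p0)*Sq)/(2*D'))^2)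
        = -(D*H)/D' := by
      rw [hDH]
      field_simp
      rw [hD'def, hD, hSq, hSa, hSb]
      ring
    have hpos : 0 < -(D*H)/D' := by
      have h1 : -(D*H)/D' = (-(D*D'))*H/D'^2 := by
        field_simp
      rw [h1]
      exact div_pos (mul_pos (neg_pos.2 hab) hHpos) (pow_two_pos_of_ne_zero hD')
    linarith

lemma onedir (p q a b : Pt)
    (hab : orient p q a * orient p q b < 0)
    (h : ∃ c : Pt, ∃ ρ : ℝ, dist p c = ρ ∧ dist q c = ρ ∧ dist a c = ρ ∧ dist b c < ρ) :
    ∃ c : Pt, ∃ ρ : ℝ, dist p c = ρ ∧ dist q c = ρ ∧ dist b c = ρ ∧ dist a c < ρ := by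
  obtain ⟨c, ρ, h1, h2, h3, h4⟩ := h
  have hρ : 0 ≤ ρ := h1 ▸ dist_nonneg
  have E1 : (p 0 - c 0)^2+(p 1 - c 1)^2 = (q 0 - c 0)^2+(q 1 - c 1)^2 := by
    rw [← distsq, ← distsq, h1, h2]
  have E2 : (p 0 - c 0)^2+(p 1 - c 1)^2 = (a 0 - c 0)^2+(a 1 - c 1)^2 := by
    rw [← distsq, ← distsq, h1, h3]
  have Hlt : (b 0 - c 0)^2+(b 1 - c 1)^2 < (p 0 - c 0)^2+(p 1 - c 1)^2 := by
    rw [← distsq, ← distsq, h1]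
    have hb : 0 ≤ dist b c := dist_nonneg
    nlinarith
  have hab' : (((q 0 - p 0)*(a 1 - p 1)-(q 1 - p 1)*(a 0 - p 0)) *
      ((q 0 - p 0)*(b 1 - p 1)-(q 1 - p 1)*(b 0 - p 0))) < 0 := hab
  obtain ⟨d0, d1, g1, g2, g3⟩ := key_scalar (p 0) (p 1) (q 0) (q 1) (a 0) (a 1) (b 0) (b 1)
    (c 0) (c 1) hab' E1 E2 Hlt
  set d : Pt := (WithLp.equiv 2 (Fin 2 → ℝ)).symm ![d0, d1] with hd
  have hd0 : d 0 = d0 := rfl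
  have hd1 : d 1 = d1 := rfl
  have sqrt_dist : ∀ x y : Pt, dist x y = Real.sqrt (dist x y ^ 2) :=
    fun x y => (Real.sqrt_sq dist_nonneg).symm
  refine ⟨d, dist p d, rfl, ?_, ?_, ?_⟩
  · rw [sqrt_dist q d, sqrt_dist p d, distsq, distsq, hd0, hd1]
    congr 1
    linarith
  · rw [sqrt_dist b d, sqrt_dist p d, distsq, distsq, hd0, hd1]
    congr 1
    linarith
  · rw [sqrt_dist a d, sqrt_dist p d, distsq, distsq, hd0, hd1]
    apply Real.sqrt_lt_sqrt (by positivity)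
    linarith

/-- If `a` and `b` lie in opposite open halfplanes bounded by the line through the
distinct points `p` and `q`, then `b` lies in the open interior of the circumdisc of
`p, q, a` iff `a` lies in the open interior of the circumdisc of `p, q, b`. -/
theorem stmt7 (p q a b : Pt) (hpq : p ≠ q)
    (hab : orient p q a * orient p q b < 0) :
    (∃ c : Pt, ∃ ρ : ℝ, dist p c = ρ ∧ dist q c = ρ ∧ dist a c = ρ ∧ dist b c < ρ) ↔
      (∃ c : Pt, ∃ ρ : ℝ, dist p c = ρ ∧ dist q c = ρ ∧ dist b c = ρ ∧ dist a c < ρ) := by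
  constructor
  · exact onedir p q a b hab
  · exact onedir p q b a (by rw [mul_comm] at hab; exact hab)
end
end

section
/- Let P be a finite set of points in the plane, let p, q ∈ P be distinct, and assume no point of P ∖ {p, q} lies on the line through p and q. Then there exists no closed disc D with p, q on its boundary and with open interior disjoint from P, if and only if there exist points a, b ∈ P ∖ {p, q} lying in opposite open halfplanes bounded by line pq such that b lies in the open interior of the circumdisc of p, q, a. -/
noncomputable section

def ctr (p q : Pt) (t : ℝ) : Pt :=
  WithLp.toLp 2 ![(p 0 + q 0) / 2 + t * (p 1 - q 1), (p 1 + q 1) / 2 + t * (q 0 - p 0)]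

lemma dist_sq (x c : Pt) : dist x c ^ 2 = (x 0 - c 0)^2 + (x 1 - c 1)^2 := by
  rw [EuclideanSpace.dist_eq, Real.sq_sqrt (by positivity)]
  simp [Fin.sum_univ_two, Real.dist_eq, sq_abs]

lemma dist_eq_iff_sq (a b : ℝ) (ha : 0 ≤ a) (hb : 0 ≤ b) : a = b ↔ a^2 = b^2 := by
  rw [sq_eq_sq_iff_abs_eq_abs, abs_of_nonneg ha, abs_of_nonneg hb]

lemma dist_lt_iff_sq (a b : ℝ) (ha : 0 ≤ a) (hb : 0 ≤ b) : a < b ↔ a^2 < b^2 := by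
  constructor <;> intro h <;> nlinarith

def aP (p q x : Pt) : ℝ :=
  (x 0 - (p 0 + q 0)/2)^2 + (x 1 - (p 1 + q 1)/2)^2
    - (p 0 - (p 0 + q 0)/2)^2 - (p 1 - (p 1 + q 1)/2)^2

lemma ctr_apply0 (p q : Pt) (t : ℝ) : ctr p q t 0 = (p 0 + q 0) / 2 + t * (p 1 - q 1) := rfl
lemma ctr_apply1 (p q : Pt) (t : ℝ) : ctr p q t 1 = (p 1 + q 1) / 2 + t * (q 0 - p 0) := rfl

lemma fval_eq (p q x : Pt) (t : ℝ) :
    dist x (ctr p q t) ^ 2 - dist p (ctr p q t) ^ 2 = aP p q x - 2 * t * orient p q x := by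
  simp only [dist_sq, ctr_apply0, ctr_apply1, aP, orient]; ring

lemma dist_q_ctr (p q : Pt) (t : ℝ) : dist p (ctr p q t) = dist q (ctr p q t) := by
  rw [dist_eq_iff_sq _ _ dist_nonneg dist_nonneg]
  simp only [dist_sq, ctr_apply0, ctr_apply1]; ring

lemma exists_t (p q c : Pt) (hpq : p ≠ q) (h : dist p c = dist q c) :
    ∃ t : ℝ, c = ctr p q t := by
  have hd : (q 0 - p 0)^2 + (q 1 - p 1)^2 ≠ 0 := by
    intro h0
    apply hpq
    have h1 : q 0 = p 0 := by nlinarith [sq_nonneg (q 0 - p 0), sq_nonneg (q 1 - p 1)]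
    have h2 : q 1 = p 1 := by nlinarith [sq_nonneg (q 0 - p 0), sq_nonneg (q 1 - p 1)]
    ext i
    fin_cases i <;> simp [h1, h2]
  have hsq : dist p c ^ 2 = dist q c ^ 2 := by rw [h]
  rw [dist_sq, dist_sq] at hsq
  set D := (q 0 - p 0)^2 + (q 1 - p 1)^2
  refine ⟨((c 0 - (p 0 + q 0)/2) * (p 1 - q 1) + (c 1 - (p 1 + q 1)/2) * (q 0 - p 0)) / D, ?_⟩
  have hperp : (c 0 - (p 0 + q 0)/2) * (q 0 - p 0) + (c 1 - (p 1 + q 1)/2) * (q 1 - p 1) = 0 := by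
    linear_combination hsq / 2
  ext i
  fin_cases i
  · show c 0 = ctr p q _ 0
    rw [ctr_apply0]
    field_simp
    linear_combination 2 * (q 0 - p 0) * hperp
  · show c 1 = ctr p q _ 1
    rw [ctr_apply1]
    field_simp
    linear_combination 2 * (q 1 - p 1) * hperp

/-- Let `P` be a finite planar point set containing the distinct points `p, q`, with no
point of `P \ {p, q}` on the line `pq`.  Then no closed disc with `p, q` on its boundary
has open interior disjoint from `P`, iff some pair `a, b ∈ P \ {p, q}` lying in opposite
open halfplanes of the line `pq` is a violating pair: `b` lies in the open interior of
the circumdisc of `p, q, a`. -/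
theorem stmt9 (P : Finset Pt) (p q : Pt) (hp : p ∈ P) (hq : q ∈ P) (hpq : p ≠ q)
    (hgen : ∀ x ∈ P, x ≠ p → x ≠ q → orient p q x ≠ 0) :
    (¬ ∃ c : Pt, ∃ ρ : ℝ, dist p c = ρ ∧ dist q c = ρ ∧
        ∀ x ∈ P, ¬ dist x c < ρ) ↔
      ∃ a ∈ P, ∃ b ∈ P, a ≠ p ∧ a ≠ q ∧ b ≠ p ∧ b ≠ q ∧
        orient p q a * orient p q b < 0 ∧
        ∃ c : Pt, ∃ ρ : ℝ, dist p c = ρ ∧ dist q c = ρ ∧ dist a c = ρ ∧ dist b c < ρ := by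
  have horp : orient p q p = 0 := by simp [orient]
  have horq : orient p q q = 0 := by unfold orient; ring
  have haPp : aP p q p = 0 := by unfold aP; ring
  have haPq : aP p q q = 0 := by unfold aP; ring
  have hlt : ∀ (x : Pt) (t : ℝ),
      dist x (ctr p q t) < dist p (ctr p q t) ↔ aP p q x - 2 * t * orient p q x < 0 := by
    intro x t
    rw [dist_lt_iff_sq _ _ dist_nonneg dist_nonneg]
    have := fval_eq p q x t
    constructor <;> intro h <;> linarith
  have heq : ∀ (x : Pt) (t : ℝ),
      dist x (ctr p q t) = dist p (ctr p q t) ↔ aP p q x - 2 * t * orient p q x = 0 := by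
    intro x t
    rw [dist_eq_iff_sq _ _ dist_nonneg dist_nonneg]
    have := fval_eq p q x t
    constructor <;> intro h <;> linarith
  constructor
  · -- forward
    intro hL
    set s : Pt → ℝ := fun x => orient p q x with hs
    set r : Pt → ℝ := fun x => aP p q x / (2 * orient p q x) with hr
    have hroot : ∀ x : Pt, s x ≠ 0 → aP p q x - 2 * r x * s x = 0 := by
      intro x hx
      simp only [hr, hs]
      have hx' : orient p q x ≠ 0 := hx
      field_simp
      ring
    -- helper to build a disc at parameter t
    have hdisc : ∀ t : ℝ, (∀ x ∈ P, ¬ aP p q x - 2 * t * orient p q x < 0) → False := by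
      intro t ht
      exact hL ⟨ctr p q t, dist p (ctr p q t), rfl, (dist_q_ctr p q t).symm,
        fun x hx hlt' => ht x hx ((hlt x t).mp hlt')⟩
    set Sp : Finset Pt := P.filter (fun x => 0 < orient p q x) with hSp
    set Sm : Finset Pt := P.filter (fun x => orient p q x < 0) with hSm
    have hside : ∀ x ∈ P, x ≠ p → x ≠ q → x ∈ Sp ∨ x ∈ Sm := by
      intro x hx hxp hxq
      rcases lt_trichotomy (orient p q x) 0 with h | h | h
      · exact Or.inr (Finset.mem_filter.mpr ⟨hx, h⟩)
      · exact absurd h (hgen x hx hxp hxq)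
      · exact Or.inl (Finset.mem_filter.mpr ⟨hx, h⟩)
    have hSpne : Sp.Nonempty := by
      by_contra hne
      obtain ⟨M, hM⟩ := (P.image r).exists_le
      apply hdisc M
      intro x hx hxl
      by_cases hxp : x = p
      · rw [hxp, haPp, horp] at hxl; simp at hxl
      by_cases hxq : x = q
      · rw [hxq, haPq, horq] at hxl; simp at hxl
      rcases hside x hx hxp hxq with h | h
      · exact hne ⟨x, h⟩
      · have hsx : orient p q x < 0 := (Finset.mem_filter.mp h).2
        have hrx : r x ≤ M := hM _ (Finset.mem_image_of_mem r hx)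
        have : M * (2 * orient p q x) ≤ aP p q x :=
          (div_le_iff_of_neg (by linarith)).mp hrx
        linarith
    have hSmne : Sm.Nonempty := by
      by_contra hne
      obtain ⟨M, hM⟩ := (P.image (fun x => -(r x))).exists_le
      apply hdisc (-M)
      intro x hx hxl
      by_cases hxp : x = p
      · rw [hxp, haPp, horp] at hxl; simp at hxl
      by_cases hxq : x = q
      · rw [hxq, haPq, horq] at hxl; simp at hxl
      rcases hside x hx hxp hxq with h | h
      · have hsx : 0 < orient p q x := (Finset.mem_filter.mp h).2
        have hrx : -(r x) ≤ M := hM _ (Finset.mem_image_of_mem _ hx)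
        have hrx' : -M ≤ r x := by linarith
        have : -M * (2 * orient p q x) ≤ aP p q x := by
          rw [← le_div_iff₀ (by linarith)]
          exact hrx'
        linarith
      · exact hne ⟨x, h⟩
    obtain ⟨b, hbSp, hbmin⟩ := Sp.exists_min_image r hSpne
    have hbP : b ∈ P := (Finset.mem_filter.mp hbSp).1
    have hsb : 0 < orient p q b := (Finset.mem_filter.mp hbSp).2
    -- the disc at t = r b fails
    have : ¬ ∀ x ∈ P, ¬ aP p q x - 2 * r b * orient p q x < 0 := fun h => hdisc (r b) h
    push_neg at this
    obtain ⟨a, haP, hfa⟩ := this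
    have hap : a ≠ p := by
      intro h; rw [h, haPp, horp] at hfa; simp at hfa
    have haq : a ≠ q := by
      intro h; rw [h, haPq, horq] at hfa; simp at hfa
    have hsa : orient p q a < 0 := by
      rcases hside a haP hap haq with h | h
      · exfalso
        have hsa' : 0 < orient p q a := (Finset.mem_filter.mp h).2
        have hmin : r b ≤ r a := hbmin a h
        have := hroot a (ne_of_gt hsa')
        nlinarith
      · exact (Finset.mem_filter.mp h).2
    have hbp : b ≠ p := by intro h; rw [h, horp] at hsb; simp at hsb
    have hbq : b ≠ q := by intro h; rw [h, horq] at hsb; simp at hsb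
    have hroota := hroot a (ne_of_lt hsa)
    have hrootb := hroot b (ne_of_gt hsb)
    -- r b < r a
    have hrba : r b < r a := by nlinarith
    refine ⟨a, haP, b, hbP, hap, haq, hbp, hbq, mul_neg_of_neg_of_pos hsa hsb,
      ctr p q (r a), dist p (ctr p q (r a)), rfl, (dist_q_ctr p q (r a)).symm, ?_, ?_⟩
    · exact (heq a (r a)).mpr hroota
    · exact (hlt b (r a)).mpr (by nlinarith)
  · -- reverse
    rintro ⟨a, haP, b, hbP, hap, haq, hbp, hbq, hprod,
      c, ρ, hpc, hqc, hac, hbc⟩ ⟨c', ρ', hpc', hqc', hemp⟩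
    obtain ⟨t, rfl⟩ := exists_t p q c hpq (hpc.trans hqc.symm)
    obtain ⟨t', rfl⟩ := exists_t p q c' hpq (hpc'.trans hqc'.symm)
    rw [← hpc] at hac hbc
    have hfa := (heq a t).mpr ((heq a t).mp hac) -- silly; just use
    have hfa0 : aP p q a - 2 * t * orient p q a = 0 := (heq a t).mp hac
    have hfb0 : aP p q b - 2 * t * orient p q b < 0 := (hlt b t).mp hbc
    have hfa' : ¬ aP p q a - 2 * t' * orient p q a < 0 := by
      intro h
      exact hemp a haP (hpc' ▸ (hlt a t').mpr h)
    have hfb' : ¬ aP p q b - 2 * t' * orient p q b < 0 := by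
      intro h
      exact hemp b hbP (hpc' ▸ (hlt b t').mpr h)
    push_neg at hfa' hfb'
    set sa := orient p q a
    set sb := orient p q b
    have h1 : sa * (t - t') ≥ 0 := by nlinarith
    have h2 : sb * (t - t') > 0 := by nlinarith
    rcases lt_trichotomy (t - t') 0 with hu | hu | hu
    · have hsb : sb < 0 := by nlinarith
      have hsa : sa ≤ 0 := by nlinarith
      nlinarith
    · rw [hu] at h2; simp at h2
    · have hsb : 0 < sb := by nlinarith
      have hsa : 0 ≤ sa := by nlinarith
      nlinarith
end
end
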